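/- Let (A,B,C,f,g) be a three-term complex in 𝒞, i.e. f : A ⟶ B, g : B ⟶ C with f ≫ g = 0. Suppose that the map Hom(A⟦1⟧, B) → Hom(A⟦1⟧, C) given by post-composition with g, u ↦ u ≫ g, is surjective. Then any two convolutions of right Postnikov systems associated to (A,B,C,f,g) are isomorphic: if Z₁ is a convolution of some right Postnikov system associated to the complex and Z₂ is a convolution of some (possibly different) right Postnikov system associated to the complex, then Z₁ ≅ Z₂. -/

import Mathlib

open CategoryTheory Category Limits Pretriangulated

/-- If `Hom(A⟦1⟧, B) → Hom(A⟦1⟧, C)`, `u ↦ u ≫ g`, is surjective, then any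
two convolutions of right Postnikov systems associated to the three-term complex
`A ⟶f B ⟶g C` are isomorphic. -/
theorem right_postnikov_convolutions_iso_of_postcomp_surjective
    {𝒞 : Type*} [Category 𝒞] [HasZeroObject 𝒞] [HasShift 𝒞 ℤ] [Preadditive 𝒞]
    [∀ n : ℤ, (CategoryTheory.shiftFunctor 𝒞 n).Additive] [Pretriangulated 𝒞]
    {A B C : 𝒞} (f : A ⟶ B) (g : B ⟶ C) (hfg : f ≫ g = 0)
    (hsurj : Function.Surjective (fun u : A⟦(1 : ℤ)⟧ ⟶ B => u ≫ g))
    {X₁ X₂ Z₁ Z₂ : 𝒞}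
    (h₁ : C ⟶ X₁) (i₁ : X₁ ⟶ B⟦(1 : ℤ)⟧) (hT₁ : Triangle.mk g h₁ i₁ ∈ distTriang 𝒞)
    (j₁ : A⟦(1 : ℤ)⟧ ⟶ X₁) (hj₁ : j₁ ≫ i₁ = f⟦(1 : ℤ)⟧')
    (p₁ : X₁ ⟶ Z₁) (q₁ : Z₁ ⟶ A⟦(1 : ℤ)⟧⟦(1 : ℤ)⟧)
    (hZ₁ : Triangle.mk j₁ p₁ q₁ ∈ distTriang 𝒞)
    (h₂ : C ⟶ X₂) (i₂ : X₂ ⟶ B⟦(1 : ℤ)⟧) (hT₂ : Triangle.mk g h₂ i₂ ∈ distTriang 𝒞)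
    (j₂ : A⟦(1 : ℤ)⟧ ⟶ X₂) (hj₂ : j₂ ≫ i₂ = f⟦(1 : ℤ)⟧')
    (p₂ : X₂ ⟶ Z₂) (q₂ : Z₂ ⟶ A⟦(1 : ℤ)⟧⟦(1 : ℤ)⟧)
    (hZ₂ : Triangle.mk j₂ p₂ q₂ ∈ distTriang 𝒞) :
    Nonempty (Z₁ ≅ Z₂) := by
  -- isomorphism of the two cones of `g`
  let eT := isoTriangleOfIso₁₂ _ _ hT₁ hT₂ (Iso.refl B) (Iso.refl C) (by exact (Category.comp_id g).trans (Category.id_comp g).symm)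
  let eX : X₁ ≅ X₂ := Triangle.π₃.mapIso eT
  have he : eX.hom ≫ i₂ = i₁ := by
    have := eT.hom.comm₃
    dsimp [eT, eX] at this ⊢
    have h1 : (isoTriangleOfIso₁₂ _ _ hT₁ hT₂ (Iso.refl B) (Iso.refl C) (by exact (Category.comp_id g).trans (Category.id_comp g).symm)).hom.hom₁ = 𝟙 B := rfl
    exact this.symm.trans ((congrArg (fun x => i₁ ≫ (shiftFunctor 𝒞 (1 : ℤ)).map x) h1).trans (by exact (congrArg (fun y => i₁ ≫ y) (CategoryTheory.Functor.map_id (shiftFunctor 𝒞 (1 : ℤ)) B)).trans (comp_id i₁)))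
  -- `j₁ ≫ e = j₂`
  have key : j₁ ≫ eX.hom = j₂ := by
    have hd : (j₁ ≫ eX.hom - j₂) ≫ i₂ = 0 := by
      rw [Preadditive.sub_comp, assoc, he, hj₁, hj₂, sub_self]
    obtain ⟨c, hc⟩ := Triangle.coyoneda_exact₃ _ hT₂
      (j₁ ≫ eX.hom - j₂) hd
    obtain ⟨u, hu⟩ := hsurj c
    have hgh : g ≫ h₂ = 0 := comp_distTriang_mor_zero₁₂ _ hT₂
    have : (j₁ ≫ eX.hom - j₂) = 0 := by
      rw [hc, ← hu]
      exact (assoc u g h₂).trans ((congrArg (u ≫ ·) hgh).trans comp_zero)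
    rw [sub_eq_zero] at this
    exact this
  -- isomorphism of the two convolution triangles
  let eZ := isoTriangleOfIso₁₂ _ _ hZ₁ hZ₂ (Iso.refl _) eX
    (by exact key.trans (Category.id_comp j₂).symm)
  exact ⟨Triangle.π₃.mapIso eZ⟩
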